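/- Suppose k is a field, λ ∈ k with λ ≠ 0, and X ≠ ∅. Then for any x ∈ X, the element 1 + λ•_x is group-like for Δ_λ (i.e. Δ_λ(1 + λ•_x) = (1 + λ•_x) ⊗ (1 + λ•_x) and ε(1 + λ•_x) = 1) but is not invertible in H(X,Ω); consequently the bialgebra (H(X,Ω), m, 1, Δ_λ, ε) admits no antipode, i.e. it is not a Hopf algebra. -/

import Mathlib

open scoped TensorProduct

universe u v w u'

/-- Decorated planar rooted trees: internal vertices are decorated by `Ω`,
leaves are decorated by `X ⊔ Ω` (a leaf decorated by `ω : Ω` is `node ω []`). -/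
inductive PTree (X : Type u) (Ω : Type v) : Type (max u v)
  | leafX : X → PTree X Ω
  | node : Ω → List (PTree X Ω) → PTree X Ω

namespace Moerdijk

variable {X : Type u} {Ω : Type v}

/-- `ℱ(X,Ω)`: decorated planar rooted forests, i.e. the free monoid on decorated
planar rooted trees under concatenation. -/
abbrev RForest (X : Type u) (Ω : Type v) := FreeMonoid (PTree X Ω)

/-- The single-vertex forest `•ₓ` for `x ∈ X`. -/
def leafF (x : X) : RForest X Ω := FreeMonoid.of (PTree.leafX x)

/-- Grafting of a forest onto a new common root decorated by `ω`. -/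
def graft (ω : Ω) (F : RForest X Ω) : RForest X Ω :=
  FreeMonoid.of (PTree.node ω (FreeMonoid.toList F))

variable (k : Type w) [CommRing k]

/-- `H(X,Ω)`: the free `k`-module on decorated planar rooted forests, a unital
associative algebra under the concatenation product. -/
abbrev RAlg (X : Type u) (Ω : Type v) := MonoidAlgebra k (RForest X Ω)

/-- The basis element of `H(X,Ω)` corresponding to a forest `F`. -/
noncomputable def ofF (F : RForest X Ω) : RAlg k X Ω := MonoidAlgebra.of k (RForest X Ω) F

/-- The grafting operator `B⁺_ω : H(X,Ω) → H(X,Ω)` as a linear map. -/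
noncomputable def Bplus (ω : Ω) : RAlg k X Ω →ₗ[k] RAlg k X Ω :=
  (MonoidAlgebra.coeffLinearEquiv k).symm.toLinearMap ∘ₗ Finsupp.lmapDomain k k (graft ω) ∘ₗ
    (MonoidAlgebra.coeffLinearEquiv k).toLinearMap

/-- The value of the coproduct `Δ_λ` on a decorated planar rooted tree:
`Δ_λ(•ₓ) = •ₓ ⊗ 1 + 1 ⊗ •ₓ + λ •ₓ ⊗ •ₓ` and
`Δ_λ(B⁺_ω(F)) = (B⁺_ω ⊗ id)Δ_λ(F) + (id ⊗ B⁺_ω)Δ_λ(F)`. -/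
noncomputable def DeltaT (lam : k) : PTree X Ω → (RAlg k X Ω ⊗[k] RAlg k X Ω)
  | .leafX x =>
      ofF k (leafF x) ⊗ₜ[k] 1 + 1 ⊗ₜ[k] ofF k (leafF x)
        + lam • (ofF k (leafF x) ⊗ₜ[k] ofF k (leafF x))
  | .node ω ts =>
      ((TensorProduct.map (Bplus k ω) LinearMap.id
        + TensorProduct.map LinearMap.id (Bplus k ω) :
          (RAlg k X Ω ⊗[k] RAlg k X Ω) →ₗ[k] (RAlg k X Ω ⊗[k] RAlg k X Ω)))
        ((ts.attach.map fun t => DeltaT lam t.1).prod)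
decreasing_by
  have := List.sizeOf_lt_of_mem t.2
  simp only [PTree.node.sizeOf_spec]
  omega

/-- The value of the coproduct `Δ_λ` on a forest: `Δ_λ(T₁⋯Tₘ) = Δ_λ(T₁)⋯Δ_λ(Tₘ)`. -/
noncomputable def DeltaF (lam : k) (F : RForest X Ω) : RAlg k X Ω ⊗[k] RAlg k X Ω :=
  ((FreeMonoid.toList F).map (DeltaT k lam)).prod

/-- The coproduct `Δ_λ : H(X,Ω) → H(X,Ω) ⊗ H(X,Ω)`. -/
noncomputable def Delta (lam : k) : RAlg k X Ω →ₗ[k] (RAlg k X Ω ⊗[k] RAlg k X Ω) :=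
  Finsupp.lsum k (fun F => LinearMap.toSpanSingleton k _ (DeltaF k lam F)) ∘ₗ
    (MonoidAlgebra.coeffLinearEquiv k).toLinearMap

/-- The counit `ε : H(X,Ω) → k`, sending the empty forest to `1` and every
nonempty forest to `0`. -/
noncomputable def eps : RAlg k X Ω →ₗ[k] k :=
  Finsupp.lsum k (fun F => LinearMap.toSpanSingleton k k
    (if (FreeMonoid.toList F).isEmpty then (1 : k) else 0)) ∘ₗ
    (MonoidAlgebra.coeffLinearEquiv k).toLinearMap


section Aux
variable {k : Type w} [Field k]

set_option maxHeartbeats 1000000 in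
lemma Delta_ofF (lam : k) (F : RForest X Ω) :
    Delta k lam (ofF k F) = DeltaF k lam F := by
  rw [Delta, ofF, MonoidAlgebra.of_apply, LinearMap.comp_apply, LinearEquiv.coe_coe,
    MonoidAlgebra.coeffLinearEquiv_apply, MonoidAlgebra.coeff_single]
  erw [Finsupp.lsum_single]
  rw [LinearMap.toSpanSingleton_apply, one_smul]

lemma ofF_one : (ofF k (1 : RForest X Ω)) = 1 := rfl

lemma Delta_one (lam : k) : Delta k lam (1 : RAlg k X Ω) = 1 ⊗ₜ[k] 1 := by
  rw [← ofF_one, Delta_ofF]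
  simp [DeltaF, Algebra.TensorProduct.one_def, ofF_one]

lemma Delta_leaf (lam : k) (x : X) :
    Delta k lam (ofF k (leafF x) : RAlg k X Ω)
      = ofF k (leafF x) ⊗ₜ[k] 1 + 1 ⊗ₜ[k] ofF k (leafF x)
        + lam • (ofF k (leafF x) ⊗ₜ[k] ofF k (leafF x)) := by
  rw [Delta_ofF]
  simp [DeltaF, leafF, DeltaT]

set_option maxHeartbeats 1000000 in
lemma eps_ofF (F : RForest X Ω) :
    eps k (ofF k F) = if (FreeMonoid.toList F).isEmpty then (1 : k) else 0 := by
  rw [eps, ofF, MonoidAlgebra.of_apply, LinearMap.comp_apply, LinearEquiv.coe_coe,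
    MonoidAlgebra.coeffLinearEquiv_apply, MonoidAlgebra.coeff_single]
  erw [Finsupp.lsum_single]
  rw [LinearMap.toSpanSingleton_apply, smul_eq_mul, one_mul]

noncomputable def toPoly : RAlg k X Ω →ₐ[k] Polynomial k :=
  MonoidAlgebra.lift k (Polynomial k) (RForest X Ω)
    (FreeMonoid.lift fun _ => (Polynomial.X : Polynomial k))

set_option maxHeartbeats 1000000 in
lemma toPoly_leaf (x : X) :
    toPoly (Ω := Ω) (ofF k (leafF x)) = Polynomial.X := by
  have h := MonoidAlgebra.lift_of (R := k) (M := RForest X Ω) (A := Polynomial k)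
    (FreeMonoid.lift fun _ => (Polynomial.X : Polynomial k)) (leafF x)
  rw [ofF, toPoly]
  erw [h]
  exact FreeMonoid.lift_eval_of _ _

set_option maxHeartbeats 1000000 in
lemma not_unit (lam : k) (hlam : lam ≠ 0) (x : X) :
    ¬ IsUnit (1 + lam • (ofF k (leafF x) : RAlg k X Ω)) := by
  intro h
  have h2 := h.map (toPoly (Ω := Ω) (k := k))
  rw [map_add, map_one, map_smul, toPoly_leaf] at h2
  have hd := Polynomial.natDegree_eq_zero_of_isUnit h2
  have hc : (1 + lam • (Polynomial.X : Polynomial k)).coeff 1 = 0 :=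
    Polynomial.coeff_eq_zero_of_natDegree_lt (by omega)
  simp [Polynomial.coeff_smul, Polynomial.coeff_one] at hc
  exact hlam hc

lemma grouplike (lam : k) (x : X) :
    Delta k lam (1 + lam • (ofF k (leafF x) : RAlg k X Ω))
      = (1 + lam • (ofF k (leafF x) : RAlg k X Ω)) ⊗ₜ[k]
          (1 + lam • (ofF k (leafF x) : RAlg k X Ω)) := by
  rw [map_add, map_smul, Delta_one, Delta_leaf]
  simp only [TensorProduct.tmul_add, TensorProduct.add_tmul, TensorProduct.smul_tmul',
    TensorProduct.tmul_smul, smul_add, smul_smul]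
  module

lemma eps_elt (lam : k) (x : X) :
    eps k (1 + lam • (ofF k (leafF x) : RAlg k X Ω)) = 1 := by
  rw [map_add, map_smul, ← ofF_one, eps_ofF, eps_ofF]
  simp [leafF]

end Aux
/-- For `k` a field, `λ ≠ 0` and `X ≠ ∅`: the element `1 + λ•ₓ` is group-like for `Δ_λ`
but not invertible, hence the bialgebra `(H(X,Ω), m, 1, Δ_λ, ε)` admits no antipode. -/
theorem not_hopf {k : Type w} [Field k] [Nonempty Ω] [Nonempty X]
    (lam : k) (hlam : lam ≠ 0) :
    (∀ x : X,
      Delta k lam (1 + lam • (ofF k (leafF x) : RAlg k X Ω))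
        = (1 + lam • (ofF k (leafF x) : RAlg k X Ω)) ⊗ₜ[k]
            (1 + lam • (ofF k (leafF x) : RAlg k X Ω)) ∧
      eps k (1 + lam • (ofF k (leafF x) : RAlg k X Ω)) = 1 ∧
      ¬ IsUnit (1 + lam • (ofF k (leafF x) : RAlg k X Ω))) ∧
    ¬ ∃ S : RAlg k X Ω →ₗ[k] RAlg k X Ω,
        (∀ y, LinearMap.mul' k (RAlg k X Ω)
            (TensorProduct.map S LinearMap.id (Delta k lam y)) = eps k y • 1) ∧
        (∀ y, LinearMap.mul' k (RAlg k X Ω)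
            (TensorProduct.map LinearMap.id S (Delta k lam y)) = eps k y • 1) := by
  have hx : ∀ x : X,
      Delta k lam (1 + lam • (ofF k (leafF x) : RAlg k X Ω))
        = (1 + lam • (ofF k (leafF x) : RAlg k X Ω)) ⊗ₜ[k]
            (1 + lam • (ofF k (leafF x) : RAlg k X Ω)) ∧
      eps k (1 + lam • (ofF k (leafF x) : RAlg k X Ω)) = 1 ∧
      ¬ IsUnit (1 + lam • (ofF k (leafF x) : RAlg k X Ω)) :=
    fun x => ⟨grouplike lam x, eps_elt lam x, not_unit lam hlam x⟩
  refine ⟨hx, ?_⟩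
  rintro ⟨S, hL, hR⟩
  obtain ⟨x⟩ := ‹Nonempty X›
  set g := 1 + lam • (ofF k (leafF x) : RAlg k X Ω) with hg
  have h1 := hL g
  have h2 := hR g
  rw [(hx x).1, (hx x).2.1] at h1 h2
  simp only [TensorProduct.map_tmul, LinearMap.mul'_apply, LinearMap.id_coe, id_eq,
    one_smul] at h1 h2
  exact (hx x).2.2 ⟨⟨g, S g, h2, h1⟩, rfl⟩

end Moerdijk
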